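/- The functions F_1, …, F_n are in involution: for all integers 1 ≤ j, k ≤ n, the Poisson bracket {F_j, F_k} vanishes identically on ℝ^{2n}. -/

import Mathlib

open Matrix BigOperators

set_option linter.unusedSectionVars false

noncomputable def bfun {n : ℕ} [NeZero n] (z : (Fin n → ℝ) × (Fin n → ℝ)) (j : Fin n) : ℝ :=
  Real.exp ((z.1 j - z.1 (j + 1)) / 2)

/-- The Lax matrix `L`. -/
noncomputable def Lax {n : ℕ} [NeZero n] (z : (Fin n → ℝ) × (Fin n → ℝ)) :
    Matrix (Fin n) (Fin n) ℝ := fun r s =>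
  (if r = s then z.2 r else 0) + (if r + 1 = s then bfun z r else 0) +
    (if s + 1 = r then bfun z s else 0)

/-- The sign `σ_r`, equal to `-1` for the index corresponding to `b_n`. -/
noncomputable def sgn {n : ℕ} [NeZero n] (j : Fin n) : ℝ := if j + 1 = 0 then -1 else 1

/-- The Lax matrix `L̄` obtained from `L` by `b_n ↦ -b_n`. -/
noncomputable def LaxBar {n : ℕ} [NeZero n] (z : (Fin n → ℝ) × (Fin n → ℝ)) :
    Matrix (Fin n) (Fin n) ℝ := fun r s =>
  (if r = s then z.2 r else 0) + (if r + 1 = s then sgn r * bfun z r else 0) +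
    (if s + 1 = r then sgn s * bfun z s else 0)

/-- The canonical Poisson bracket on `ℝ^{2n}`. -/
noncomputable def pb {n : ℕ} (f g : (Fin n → ℝ) × (Fin n → ℝ) → ℝ)
    (z : (Fin n → ℝ) × (Fin n → ℝ)) : ℝ :=
  ∑ j : Fin n,
    (fderiv ℝ f z (Pi.single j 1, 0) * fderiv ℝ g z (0, Pi.single j 1) -
     fderiv ℝ f z (0, Pi.single j 1) * fderiv ℝ g z (Pi.single j 1, 0))

/-- The integrals of motion `F_j = (1/j) Tr L^j`. -/
noncomputable def F {n : ℕ} [NeZero n] (j : ℕ) (z : (Fin n → ℝ) × (Fin n → ℝ)) : ℝ :=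
  (1 / j : ℝ) * (Lax z ^ j).trace

/-- The map `F = (F_1, …, F_n) : ℝ^{2n} → ℝ^n`. -/
noncomputable def Fvec {n : ℕ} [NeZero n] (z : (Fin n → ℝ) × (Fin n → ℝ)) : Fin n → ℝ :=
  fun j => F (j.val + 1) z

/-- The corank of `dF(z)`. -/
noncomputable def corank (n : ℕ) [NeZero n] (z : (Fin n → ℝ) × (Fin n → ℝ)) : ℕ :=
  n - Module.finrank ℝ (LinearMap.range (fderiv ℝ (Fvec (n := n)) z).toLinearMap)

/-- Number of (real) eigenvalues of `A` with two-dimensional eigenspace. -/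
noncomputable def nuCount {n : ℕ} (A : Matrix (Fin n) (Fin n) ℝ) : ℕ :=
  {μ : ℝ | Module.finrank ℝ (LinearMap.ker (Matrix.toLin' (A - μ • 1))) = 2}.ncard

/-! ### Auxiliary algebraic development -/

section Core
variable {n : ℕ} [NeZero n]

/-- Abstract cyclic tridiagonal matrix. -/
def Lmat (p b : Fin n → ℝ) : Matrix (Fin n) (Fin n) ℝ := fun r s =>
  (if r = s then p r else 0) + (if r + 1 = s then b r else 0) + (if s + 1 = r then b s else 0)

lemma sum_shift (f : Fin n → ℝ) : ∑ m, f m = ∑ m, f (m + 1) :=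
  (Fintype.sum_equiv (Equiv.addRight (1 : Fin n)) (fun m => f (m + 1)) f (fun x => by simp)).symm

lemma sum_shift' (f : Fin n → ℝ) : ∑ m, f m = ∑ m, f (m - 1) :=
  (Fintype.sum_equiv (Equiv.subRight (1 : Fin n)) (fun m => f (m - 1)) f (fun x => by simp)).symm

lemma sum_if_succ (f : Fin n → ℝ) (c : Fin n) :
    (∑ t, if t + 1 = c then f t else 0) = f (c - 1) := by
  have h : ∀ t : Fin n, (t + 1 = c) = (t = c - 1) := by
    intro t; simp [eq_sub_iff_add_eq]
  simp_rw [h]; simp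

lemma Lmul_apply (p b : Fin n → ℝ) (B : Matrix (Fin n) (Fin n) ℝ) (m s : Fin n) :
    (Lmat p b * B) m s = p m * B m s + b m * B (m + 1) s + b (m - 1) * B (m - 1) s := by
  rw [Matrix.mul_apply]
  unfold Lmat
  simp_rw [add_mul, ite_mul, zero_mul, Finset.sum_add_distrib]
  rw [Finset.sum_ite_eq, Finset.sum_ite_eq, sum_if_succ (fun t => b t * B t s)]
  simp

lemma mulL_apply (p b : Fin n → ℝ) (B : Matrix (Fin n) (Fin n) ℝ) (m s : Fin n) :
    (B * Lmat p b) m s = B m s * p s + B m (s - 1) * b (s - 1) + B m (s + 1) * b s := by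
  rw [Matrix.mul_apply]
  unfold Lmat
  simp_rw [mul_add, mul_ite, mul_zero, Finset.sum_add_distrib]
  rw [Finset.sum_ite_eq', sum_if_succ (fun t => B m t * b t), Finset.sum_ite_eq]
  simp

variable (b : Fin n → ℝ) (A B : Matrix (Fin n) (Fin n) ℝ)

def Yfun (d : Fin n) : ℝ :=
  ∑ m, b m * (A m (m + d) * B (m + 1) (m + d) - B m (m + d) * A (m + 1) (m + d))

def Ufun (d : Fin n) : ℝ :=
  ∑ m, b (m + d) * (A m (m + d) * B m (m + d + 1) - B m (m + d) * A m (m + d + 1))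

lemma key_step (p : Fin n → ℝ)
    (hA : Lmat p b * A = A * Lmat p b) (hB : Lmat p b * B = B * Lmat p b) (d : Fin n) :
    Yfun b A B d + Ufun b A B (d - 1) = Yfun b A B (d + 1) + Ufun b A B d := by
  have hBc : ∀ m s, p m * B m s + b m * B (m + 1) s + b (m - 1) * B (m - 1) s
      = B m s * p s + B m (s - 1) * b (s - 1) + B m (s + 1) * b s := by
    intro m s; rw [← Lmul_apply, ← mulL_apply, hB]
  have hAc : ∀ m s, p m * A m s + b m * A (m + 1) s + b (m - 1) * A (m - 1) s
      = A m s * p s + A m (s - 1) * b (s - 1) + A m (s + 1) * b s := by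
    intro m s; rw [← Lmul_apply, ← mulL_apply, hA]
  unfold Yfun Ufun
  rw [sum_shift' (fun m => b m * (A m (m + (d + 1)) * B (m + 1) (m + (d + 1)) -
        B m (m + (d + 1)) * A (m + 1) (m + (d + 1))))]
  rw [← Finset.sum_add_distrib, ← Finset.sum_add_distrib]
  apply Finset.sum_congr rfl
  intro m _
  have e1 : m + (d - 1) + 1 = m + d := by abel
  have e2 : m + (d - 1) = m + d - 1 := by abel
  have e3 : m - 1 + (d + 1) = m + d := by abel
  have e4 : m - 1 + 1 = m := by abel
  rw [e1, e2, e3, e4]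
  linear_combination A m (m + d) * hBc m (m + d) - B m (m + d) * hAc m (m + d)

lemma sum_Y_zero (hAs : ∀ a c, A a c = A c a) (hBs : ∀ a c, B a c = B c a)
    (hAB : A * B = B * A) : ∑ d, Yfun b A B d = 0 := by
  unfold Yfun
  rw [Finset.sum_comm]
  apply Finset.sum_eq_zero
  intro m _
  have hre : (∑ x : Fin n, b m * (A m (m + x) * B (m + 1) (m + x) - B m (m + x) * A (m + 1) (m + x)))
      = ∑ s, b m * (A m s * B (m + 1) s - B m s * A (m + 1) s) :=
    Fintype.sum_equiv (Equiv.addLeft m) _ _ (fun x => by simp)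
  rw [hre, ← Finset.mul_sum, Finset.sum_sub_distrib]
  have h1 : ∑ s, A m s * B (m + 1) s = (A * B) m (m + 1) := by
    rw [Matrix.mul_apply]; exact Finset.sum_congr rfl fun s _ => by rw [hBs]
  have h2 : ∑ s, B m s * A (m + 1) s = (B * A) m (m + 1) := by
    rw [Matrix.mul_apply]; exact Finset.sum_congr rfl fun s _ => by rw [hAs]
  rw [h1, h2, hAB, sub_self, mul_zero]

lemma sum_U_zero (hAs : ∀ a c, A a c = A c a) (hBs : ∀ a c, B a c = B c a)
    (hAB : A * B = B * A) : ∑ d, Ufun b A B d = 0 := by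
  unfold Ufun
  rw [Finset.sum_comm]
  have hre : ∀ m : Fin n,
      (∑ x : Fin n, b (m + x) * (A m (m + x) * B m (m + x + 1) - B m (m + x) * A m (m + x + 1)))
      = ∑ s, b s * (A m s * B m (s + 1) - B m s * A m (s + 1)) := fun m =>
    Fintype.sum_equiv (Equiv.addLeft m) _ _ (fun x => by simp)
  rw [Finset.sum_congr rfl (fun m _ => hre m), Finset.sum_comm]
  apply Finset.sum_eq_zero
  intro s _
  rw [← Finset.mul_sum, Finset.sum_sub_distrib]
  have h1 : ∑ m, A m s * B m (s + 1) = (A * B) s (s + 1) := by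
    rw [Matrix.mul_apply]; exact Finset.sum_congr rfl fun m _ => by rw [hAs s m]
  have h2 : ∑ m, B m s * A m (s + 1) = (B * A) s (s + 1) := by
    rw [Matrix.mul_apply]; exact Finset.sum_congr rfl fun m _ => by rw [hBs s m]
  rw [h1, h2, hAB, sub_self, mul_zero]

open Fin.NatCast in
lemma const_sum_zero (W : Fin n → ℝ) (hstep : ∀ d, W d = W (d + 1))
    (hsum : ∑ d, W d = 0) : W 0 = 0 := by
  have hconst : ∀ d : Fin n, W d = W 0 := by
    have hnat : ∀ k : ℕ, W (k : Fin n) = W 0 := by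
      intro k
      induction k with
      | zero => simp
      | succ k ih => rw [Nat.cast_succ, ← hstep, ih]
    intro d
    have : ((d.val : ℕ) : Fin n) = d := Fin.cast_val_eq_self d
    rw [← this, hnat]
  rw [Finset.sum_congr rfl (fun d _ => hconst d)] at hsum
  rw [Finset.sum_const, Finset.card_univ, Fintype.card_fin] at hsum
  have hn : (n : ℝ) ≠ 0 := Nat.cast_ne_zero.mpr (NeZero.ne n)
  rw [nsmul_eq_mul] at hsum
  exact (mul_eq_zero.mp hsum).resolve_left hn

theorem core_involution (p : Fin n → ℝ)
    (hAs : ∀ a c, A a c = A c a) (hBs : ∀ a c, B a c = B c a)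
    (hA : Lmat p b * A = A * Lmat p b) (hB : Lmat p b * B = B * Lmat p b)
    (hAB : A * B = B * A) :
    ∑ m, ((b m * A m (m + 1) - b (m - 1) * A (m - 1) m) * B m m
      - A m m * (b m * B m (m + 1) - b (m - 1) * B (m - 1) m)) = 0 := by
  have hW0 : Yfun b A B 0 + Ufun b A B (0 - 1) = 0 := by
    apply const_sum_zero (fun d => Yfun b A B d + Ufun b A B (d - 1))
    · intro d
      show Yfun b A B d + Ufun b A B (d - 1) = Yfun b A B (d + 1) + Ufun b A B (d + 1 - 1)
      have : d + 1 - 1 = d := by abel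
      rw [this]
      exact key_step b A B p hA hB d
    · rw [Finset.sum_add_distrib]
      have : (∑ d, Ufun b A B (d - 1)) = ∑ d, Ufun b A B d :=
        Fintype.sum_equiv (Equiv.subRight (1 : Fin n)) _ _ (fun x => by simp)
      rw [this, sum_Y_zero b A B hAs hBs hAB, sum_U_zero b A B hAs hBs hAB, add_zero]
  have hY : Yfun b A B 0 = ∑ m, b m * (A m m * B (m + 1) m - B m m * A (m + 1) m) := by
    unfold Yfun
    apply Finset.sum_congr rfl
    intro m _
    have : m + (0 : Fin n) = m := add_zero m
    rw [this]
  have hU : Ufun b A B (0 - 1) = ∑ m, b m * (A (m + 1) m * B (m + 1) (m + 1)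
      - B (m + 1) m * A (m + 1) (m + 1)) := by
    unfold Ufun
    rw [sum_shift (fun m => b (m + (0 - 1)) * (A m (m + (0 - 1)) * B m (m + (0 - 1) + 1)
        - B m (m + (0 - 1)) * A m (m + (0 - 1) + 1)))]
    apply Finset.sum_congr rfl
    intro m _
    have e1 : m + 1 + (0 - 1) + 1 = m + 1 := by abel
    have e2 : m + 1 + (0 - 1) = m := by abel
    rw [e1, e2]
  have hsplit : (∑ m, ((b m * A m (m + 1) - b (m - 1) * A (m - 1) m) * B m m
      - A m m * (b m * B m (m + 1) - b (m - 1) * B (m - 1) m)))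
      = (∑ m, (b m * A m (m + 1) * B m m - A m m * (b m * B m (m + 1))))
      - ∑ m, (b (m - 1) * A (m - 1) m * B m m - A m m * (b (m - 1) * B (m - 1) m)) := by
    rw [← Finset.sum_sub_distrib]
    apply Finset.sum_congr rfl
    intro m _
    ring
  have hshift : (∑ m, (b (m - 1) * A (m - 1) m * B m m - A m m * (b (m - 1) * B (m - 1) m)))
      = ∑ m, (b m * A m (m + 1) * B (m + 1) (m + 1) - A (m + 1) (m + 1) * (b m * B m (m + 1))) := by
    rw [sum_shift (fun m => b (m - 1) * A (m - 1) m * B m m - A m m * (b (m - 1) * B (m - 1) m))]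
    apply Finset.sum_congr rfl
    intro m _
    have e : m + 1 - 1 = m := by abel
    rw [e]
  rw [hsplit, hshift]
  rw [hY, hU] at hW0
  rw [← Finset.sum_add_distrib] at hW0
  rw [← Finset.sum_sub_distrib]
  have key : ∀ m : Fin n, (b m * A m (m + 1) * B m m - A m m * (b m * B m (m + 1))
      - (b m * A m (m + 1) * B (m + 1) (m + 1) - A (m + 1) (m + 1) * (b m * B m (m + 1))))
      = -(b m * (A m m * B (m + 1) m - B m m * A (m + 1) m)
        + b m * (A (m + 1) m * B (m + 1) (m + 1) - B (m + 1) m * A (m + 1) (m + 1))) := by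
    intro m
    have h1 : A (m + 1) m = A m (m + 1) := hAs _ _
    have h2 : B (m + 1) m = B m (m + 1) := hBs _ _
    rw [h1, h2]; ring
  rw [Finset.sum_congr rfl (fun m _ => key m), Finset.sum_neg_distrib, hW0, neg_zero]

end Core

/-! ### Analytic development: derivatives of the entries of powers of the Lax matrix -/

section An
variable {n : ℕ} [NeZero n]

abbrev Vn (n : ℕ) := (Fin n → ℝ) × (Fin n → ℝ)

noncomputable def pr1 (m : Fin n) : Vn n →L[ℝ] ℝ :=
  (ContinuousLinearMap.proj m).comp (ContinuousLinearMap.fst ℝ (Fin n → ℝ) (Fin n → ℝ))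
noncomputable def pr2 (m : Fin n) : Vn n →L[ℝ] ℝ :=
  (ContinuousLinearMap.proj m).comp (ContinuousLinearMap.snd ℝ (Fin n → ℝ) (Fin n → ℝ))
noncomputable def hdf (r : Fin n) : Vn n →L[ℝ] ℝ := (1 / 2 : ℝ) • (pr1 r - pr1 (r + 1))

@[simp] lemma pr1_apply (m : Fin n) (v : Vn n) : pr1 m v = v.1 m := rfl
@[simp] lemma pr2_apply (m : Fin n) (v : Vn n) : pr2 m v = v.2 m := rfl
@[simp] lemma hdf_apply (r : Fin n) (v : Vn n) : hdf r v = (v.1 r - v.1 (r + 1)) / 2 := by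
  simp [hdf]; ring

noncomputable def dLax (z : Vn n) (r s : Fin n) : Vn n →L[ℝ] ℝ :=
  (if r = s then pr2 r else 0) + (if r + 1 = s then bfun z r • hdf r else 0) +
    (if s + 1 = r then bfun z s • hdf s else 0)

lemma dLax_apply (z : Vn n) (r s : Fin n) (v : Vn n) :
    dLax z r s v = (if r = s then v.2 r else 0)
      + (if r + 1 = s then bfun z r * ((v.1 r - v.1 (r + 1)) / 2) else 0)
      + (if s + 1 = r then bfun z s * ((v.1 s - v.1 (s + 1)) / 2) else 0) := by
  unfold dLax
  simp only [ContinuousLinearMap.add_apply, apply_ite (fun (f : Vn n →L[ℝ] ℝ) => f v),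
    ContinuousLinearMap.smul_apply, ContinuousLinearMap.zero_apply, hdf_apply, pr2_apply,
    smul_eq_mul]

lemma hasfd_bfun (z : Vn n) (r : Fin n) :
    HasFDerivAt (fun w : Vn n => bfun w r) (bfun z r • hdf r) z := by
  have h := ((hdf r).hasFDerivAt (x := z)).exp
  have heq : (fun w : Vn n => Real.exp (hdf r w)) = fun w : Vn n => bfun w r := by
    funext w; simp [bfun]
  have hval : Real.exp (hdf r z) = bfun z r := by simp [bfun]
  rw [heq, hval] at h; exact h

lemma hasfd_entry (z : Vn n) (r s : Fin n) :
    HasFDerivAt (fun w : Vn n => Lax w r s) (dLax z r s) z := by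
  have h1 : HasFDerivAt (fun w : Vn n => if r = s then w.2 r else 0)
      (if r = s then pr2 r else 0) z := by
    split_ifs with h
    · exact (pr2 r).hasFDerivAt
    · exact hasFDerivAt_const 0 z
  have h2 : HasFDerivAt (fun w : Vn n => if r + 1 = s then bfun w r else 0)
      (if r + 1 = s then bfun z r • hdf r else 0) z := by
    split_ifs with h
    · exact hasfd_bfun z r
    · exact hasFDerivAt_const 0 z
  have h3 : HasFDerivAt (fun w : Vn n => if s + 1 = r then bfun w s else 0)
      (if s + 1 = r then bfun z s • hdf s else 0) z := by
    split_ifs with h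
    · exact hasfd_bfun z s
    · exact hasFDerivAt_const 0 z
  exact (h1.add h2).add h3

noncomputable def Mcoef (z : Vn n) (j : ℕ) (r s a c : Fin n) : ℝ :=
  ∑ i ∈ Finset.range j, (Lax z ^ i) r a * (Lax z ^ (j - 1 - i)) c s

noncomputable def Dmat (z : Vn n) (j : ℕ) (r s : Fin n) : Vn n →L[ℝ] ℝ :=
  ∑ a, ∑ c, Mcoef z j r s a c • dLax z a c

lemma Mrec (z : Vn n) (j : ℕ) (r s a c : Fin n) :
    Mcoef z (j + 1) r s a c
      = (if c = s then (Lax z ^ j) r a else 0) + ∑ t, Lax z t s * Mcoef z j r t a c := by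
  unfold Mcoef
  rw [Finset.sum_range_succ]
  have h0 : (j + 1 - 1 - j) = 0 := by omega
  rw [h0, pow_zero, Matrix.one_apply, mul_ite, mul_one, mul_zero]
  rw [add_comm]
  congr 1
  · have hswap : (∑ t, Lax z t s * ∑ i ∈ Finset.range j, (Lax z ^ i) r a * (Lax z ^ (j - 1 - i)) c t)
        = ∑ i ∈ Finset.range j, ∑ t, (Lax z ^ i) r a * ((Lax z ^ (j - 1 - i)) c t * Lax z t s) := by
      simp_rw [Finset.mul_sum]
      rw [Finset.sum_comm]
      apply Finset.sum_congr rfl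
      intro i _
      apply Finset.sum_congr rfl
      intro t _
      ring
    rw [hswap]
    apply Finset.sum_congr rfl
    intro i hi
    rw [← Finset.mul_sum, ← Matrix.mul_apply, ← pow_succ]
    have : j - 1 - i + 1 = j + 1 - 1 - i := by
      have := Finset.mem_range.mp hi; omega
    rw [this]

lemma Dmat_succ (z : Vn n) (j : ℕ) (r s : Fin n) :
    Dmat z (j + 1) r s = ∑ t, ((Lax z ^ j) r t • dLax z t s + Lax z t s • Dmat z j r t) := by
  apply ContinuousLinearMap.ext
  intro v
  simp only [Dmat, ContinuousLinearMap.sum_apply, ContinuousLinearMap.add_apply,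
    ContinuousLinearMap.smul_apply, smul_eq_mul]
  simp_rw [Mrec, add_mul, Finset.sum_add_distrib, ite_mul, zero_mul]
  congr 1
  · simp [Finset.sum_ite_eq']
  · simp_rw [Finset.sum_mul, Finset.mul_sum]
    have hinner : ∀ a : Fin n,
        (∑ c, ∑ t, Lax z t s * Mcoef z j r t a c * dLax z a c v)
        = ∑ t, ∑ c, Lax z t s * Mcoef z j r t a c * dLax z a c v := fun a => Finset.sum_comm
    calc (∑ a, ∑ c, ∑ t, Lax z t s * Mcoef z j r t a c * dLax z a c v)
        = ∑ a, ∑ t, ∑ c, Lax z t s * Mcoef z j r t a c * dLax z a c v :=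
          Finset.sum_congr rfl (fun a _ => hinner a)
      _ = ∑ t, ∑ a, ∑ c, Lax z t s * Mcoef z j r t a c * dLax z a c v := Finset.sum_comm
      _ = ∑ t, ∑ a, ∑ c, Lax z t s * (Mcoef z j r t a c * dLax z a c v) := by
          apply Finset.sum_congr rfl; intro t _
          apply Finset.sum_congr rfl; intro a _
          apply Finset.sum_congr rfl; intro c _
          ring

lemma hasfd_pow (z : Vn n) (j : ℕ) (r s : Fin n) :
    HasFDerivAt (fun w : Vn n => (Lax w ^ j) r s) (Dmat z j r s) z := by
  induction j generalizing r s with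
  | zero =>
    have hD : Dmat z 0 r s = 0 := by
      unfold Dmat Mcoef; simp
    rw [hD]
    have heq : (fun w : Vn n => (Lax w ^ 0) r s)
        = fun _ : Vn n => (1 : Matrix (Fin n) (Fin n) ℝ) r s := by
      funext w; rw [pow_zero]
    rw [heq]
    exact hasFDerivAt_const _ _
  | succ j ih =>
    have h : HasFDerivAt (fun w : Vn n => ∑ t, (Lax w ^ j) r t * Lax w t s)
        (∑ t, ((Lax z ^ j) r t • dLax z t s + Lax z t s • Dmat z j r t)) z := by
      apply HasFDerivAt.fun_sum
      intro t _
      exact (ih r t).mul (hasfd_entry z t s)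
    have heq : (fun w : Vn n => (Lax w ^ (j + 1)) r s)
        = fun w : Vn n => ∑ t, (Lax w ^ j) r t * Lax w t s := by
      funext w; rw [pow_succ, Matrix.mul_apply]
    rw [heq, Dmat_succ]
    exact h

lemma Mcoef_trace (z : Vn n) (j : ℕ) (a c : Fin n) :
    ∑ r, Mcoef z j r r a c = (j : ℝ) * (Lax z ^ (j - 1)) c a := by
  unfold Mcoef
  rw [Finset.sum_comm]
  have h : ∀ i ∈ Finset.range j,
      (∑ r, (Lax z ^ i) r a * (Lax z ^ (j - 1 - i)) c r) = (Lax z ^ (j - 1)) c a := by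
    intro i hi
    have h1 : (∑ r, (Lax z ^ i) r a * (Lax z ^ (j - 1 - i)) c r)
        = (Lax z ^ (j - 1 - i) * Lax z ^ i) c a := by
      rw [Matrix.mul_apply]
      apply Finset.sum_congr rfl; intro r _; ring
    rw [h1, ← pow_add]
    have hij := Finset.mem_range.mp hi
    have he : j - 1 - i + i = j - 1 := by omega
    rw [he]
  rw [Finset.sum_congr rfl h, Finset.sum_const, Finset.card_range, nsmul_eq_mul]

noncomputable def dF (z : Vn n) (j : ℕ) : Vn n →L[ℝ] ℝ :=
  ∑ a, ∑ c, (Lax z ^ (j - 1)) c a • dLax z a c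

lemma hasfd_F (z : Vn n) (j : ℕ) (hj : j ≠ 0) : HasFDerivAt (F (n := n) j) (dF z j) z := by
  have h : HasFDerivAt (fun w : Vn n => ∑ r, (Lax w ^ j) r r) (∑ r, Dmat z j r r) z :=
    HasFDerivAt.fun_sum (fun r _ => hasfd_pow z j r r)
  have h2 := h.const_mul (1 / j : ℝ)
  have heq : (fun w : Vn n => (1 / j : ℝ) * ∑ r, (Lax w ^ j) r r) = F (n := n) j := by
    funext w; simp [F, Matrix.trace, Matrix.diag]
  rw [heq] at h2
  have hD : dF z j = (1 / j : ℝ) • ∑ r, Dmat z j r r := by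
    apply ContinuousLinearMap.ext
    intro v
    simp only [dF, Dmat, ContinuousLinearMap.sum_apply, ContinuousLinearMap.smul_apply,
      smul_eq_mul]
    have hs : (∑ r, ∑ a, ∑ c, Mcoef z j r r a c * dLax z a c v)
        = ∑ a, ∑ c, (∑ r, Mcoef z j r r a c) * dLax z a c v := by
      rw [Finset.sum_comm]
      apply Finset.sum_congr rfl; intro a _
      rw [Finset.sum_comm]
      apply Finset.sum_congr rfl; intro c _
      rw [Finset.sum_mul]
    rw [hs]
    simp_rw [Mcoef_trace]
    rw [Finset.mul_sum]
    apply Finset.sum_congr rfl; intro a _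
    rw [Finset.mul_sum]
    apply Finset.sum_congr rfl; intro c _
    have hjr : (j : ℝ) ≠ 0 := Nat.cast_ne_zero.mpr hj
    field_simp
  rw [hD]
  exact h2

lemma sum_dLax_p (z : Vn n) (A : Matrix (Fin n) (Fin n) ℝ) (m : Fin n) :
    (∑ a, ∑ c, A c a • dLax z a c) ((0 : Fin n → ℝ), Pi.single m 1) = A m m := by
  simp only [ContinuousLinearMap.sum_apply, ContinuousLinearMap.smul_apply, smul_eq_mul,
    dLax_apply]
  norm_num
  simp [Pi.single_apply]

lemma sum_dLax_q (z : Vn n) (A : Matrix (Fin n) (Fin n) ℝ)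
    (hAs : ∀ a c, A a c = A c a) (m : Fin n) :
    (∑ a, ∑ c, A c a • dLax z a c) (Pi.single m 1, (0 : Fin n → ℝ))
      = bfun z m * A m (m + 1) - bfun z (m - 1) * A (m - 1) m := by
  simp only [ContinuousLinearMap.sum_apply, ContinuousLinearMap.smul_apply, smul_eq_mul,
    dLax_apply]
  norm_num
  simp_rw [mul_add, Finset.sum_add_distrib]
  have hE : ∀ x : Fin n, (∑ c, A c x * (if x + 1 = c then
      bfun z x * (((Pi.single m 1 : Fin n → ℝ) x - (Pi.single m 1 : Fin n → ℝ) (x + 1)) / 2) else 0))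
      = A (x + 1) x * (bfun z x * (((Pi.single m 1 : Fin n → ℝ) x
        - (Pi.single m 1 : Fin n → ℝ) (x + 1)) / 2)) := by
    intro x
    simp_rw [mul_ite, mul_zero]
    rw [Finset.sum_ite_eq]
    simp
  have hG : (∑ x : Fin n, ∑ c : Fin n, A c x * (if c + 1 = x then
      bfun z c * (((Pi.single m 1 : Fin n → ℝ) c - (Pi.single m 1 : Fin n → ℝ) (c + 1)) / 2) else 0))
      = ∑ c : Fin n, A c (c + 1) * (bfun z c * (((Pi.single m 1 : Fin n → ℝ) c
        - (Pi.single m 1 : Fin n → ℝ) (c + 1)) / 2)) := by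
    rw [Finset.sum_comm]
    apply Finset.sum_congr rfl
    intro c _
    simp_rw [mul_ite, mul_zero]
    rw [Finset.sum_ite_eq]
    simp
  rw [Finset.sum_congr rfl (fun x _ => hE x), hG, ← Finset.sum_add_distrib]
  have hmerge : ∀ x : Fin n, (A (x + 1) x * (bfun z x * (((Pi.single m 1 : Fin n → ℝ) x
        - (Pi.single m 1 : Fin n → ℝ) (x + 1)) / 2))
      + A x (x + 1) * (bfun z x * (((Pi.single m 1 : Fin n → ℝ) x
        - (Pi.single m 1 : Fin n → ℝ) (x + 1)) / 2)))
      = A x (x + 1) * bfun z x * (Pi.single m 1 : Fin n → ℝ) x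
        - A x (x + 1) * bfun z x * (Pi.single m 1 : Fin n → ℝ) (x + 1) := by
    intro x
    rw [hAs (x + 1) x]
    ring
  rw [Finset.sum_congr rfl (fun x _ => hmerge x), Finset.sum_sub_distrib]
  have hfirst : (∑ x : Fin n, A x (x + 1) * bfun z x * (Pi.single m 1 : Fin n → ℝ) x)
      = A m (m + 1) * bfun z m := by
    simp [Pi.single_apply, mul_ite]
  have hsecond : (∑ x : Fin n, A x (x + 1) * bfun z x * (Pi.single m 1 : Fin n → ℝ) (x + 1))
      = A (m - 1) m * bfun z (m - 1) := by
    have hc : ∀ x : Fin n, A x (x + 1) * bfun z x * (Pi.single m 1 : Fin n → ℝ) (x + 1)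
        = if x + 1 = m then A x (x + 1) * bfun z x else 0 := by
      intro x
      rw [Pi.single_apply]
      split_ifs with h <;> simp [h]
    rw [Finset.sum_congr rfl (fun x _ => hc x), sum_if_succ (fun x => A x (x + 1) * bfun z x)]
    have : m - 1 + 1 = m := by abel
    rw [this]
  rw [hfirst, hsecond]
  ring

end An

/-! ### Main theorem -/

theorem stmt5 (n : ℕ) [NeZero n] (hn : 2 ≤ n) (j k : ℕ) (hj1 : 1 ≤ j) (hjn : j ≤ n)
    (hk1 : 1 ≤ k) (hkn : k ≤ n) (z : (Fin n → ℝ) × (Fin n → ℝ)) :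
    pb (F (n := n) j) (F k) z = 0 := by
  have hj0 : j ≠ 0 := by omega
  have hk0 : k ≠ 0 := by omega
  have hLs : ∀ a c : Fin n, Lax z a c = Lax z c a := by
    intro a c
    unfold Lax
    rcases eq_or_ne a c with h | h
    · subst h; ring
    · have h' : ¬ c = a := fun hc => h hc.symm
      rw [if_neg h, if_neg h']
      ring
  have hPowSym : ∀ (t : ℕ) (a c : Fin n), (Lax z ^ t) a c = (Lax z ^ t) c a := by
    intro t
    have hT : (Lax z)ᵀ = Lax z := by
      ext a c
      rw [Matrix.transpose_apply]
      exact hLs c a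
    have hTp : (Lax z ^ t)ᵀ = Lax z ^ t := by
      rw [Matrix.transpose_pow, hT]
    intro a c
    conv_lhs => rw [← hTp]
    rw [Matrix.transpose_apply]
  have hFj := (hasfd_F z j hj0).fderiv
  have hFk := (hasfd_F z k hk0).fderiv
  unfold pb
  rw [hFj, hFk]
  unfold dF
  have hterm : ∀ m : Fin n,
      (∑ a, ∑ c, (Lax z ^ (j - 1)) c a • dLax z a c) (Pi.single m 1, (0 : Fin n → ℝ))
        * (∑ a, ∑ c, (Lax z ^ (k - 1)) c a • dLax z a c) ((0 : Fin n → ℝ), Pi.single m 1)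
      - (∑ a, ∑ c, (Lax z ^ (j - 1)) c a • dLax z a c) ((0 : Fin n → ℝ), Pi.single m 1)
        * (∑ a, ∑ c, (Lax z ^ (k - 1)) c a • dLax z a c) (Pi.single m 1, (0 : Fin n → ℝ))
      = (bfun z m * (Lax z ^ (j - 1)) m (m + 1)
          - bfun z (m - 1) * (Lax z ^ (j - 1)) (m - 1) m) * (Lax z ^ (k - 1)) m m
        - (Lax z ^ (j - 1)) m m * (bfun z m * (Lax z ^ (k - 1)) m (m + 1)
          - bfun z (m - 1) * (Lax z ^ (k - 1)) (m - 1) m) := by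
    intro m
    rw [sum_dLax_q z (Lax z ^ (j - 1)) (hPowSym (j - 1)) m,
      sum_dLax_q z (Lax z ^ (k - 1)) (hPowSym (k - 1)) m,
      sum_dLax_p z (Lax z ^ (j - 1)) m, sum_dLax_p z (Lax z ^ (k - 1)) m]
  rw [Finset.sum_congr rfl (fun m _ => hterm m)]
  have hLL : Lmat z.2 (bfun z) = Lax z := rfl
  apply core_involution (bfun z) (Lax z ^ (j - 1)) (Lax z ^ (k - 1)) z.2
    (hPowSym (j - 1)) (hPowSym (k - 1))
  · rw [hLL]
    exact ((Commute.refl (Lax z)).pow_right (j - 1)).eq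
  · rw [hLL]
    exact ((Commute.refl (Lax z)).pow_right (k - 1)).eq
  · exact (((Commute.refl (Lax z)).pow_pow (j - 1) (k - 1))).eq
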